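/- Let m > 4. The transvector-algebra generators are pairwise Fischer adjoint: (i) for every double harmonic P ∈ 𝒫_{p,q} and every double harmonic Q ∈ 𝒫_{p+1,q+1}, [C P, Q]_F = [P, A Q]_F; (ii) for every double harmonic P ∈ 𝒫_{p,q} and every double harmonic Q ∈ 𝒫_{p−1,q+1}, [S_u P, Q]_F = [P, S_x Q]_F. -/

import Mathlib

open MvPolynomial

noncomputable section

/-- Polynomials in two vector variables `x = (x_1,…,x_m)` (the `Sum.inl` variables)
and `u = (u_1,…,u_m)` (the `Sum.inr` variables), with complex coefficients. -/
abbrev PP (m : ℕ) := MvPolynomial (Fin m ⊕ Fin m) ℂ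

/-- The Laplace operator `Δ_x` in the `x`-variables. -/
def lapX (m : ℕ) (P : PP m) : PP m :=
  ∑ j : Fin m, pderiv (Sum.inl j) (pderiv (Sum.inl j) P)

/-- The Laplace operator `Δ_u` in the `u`-variables. -/
def lapU (m : ℕ) (P : PP m) : PP m :=
  ∑ j : Fin m, pderiv (Sum.inr j) (pderiv (Sum.inr j) P)

/-- The mixed operator `⟨∂_u,∂_x⟩ = Σ_j ∂_{u_j} ∂_{x_j}`. -/
def dudx (m : ℕ) (P : PP m) : PP m :=
  ∑ j : Fin m, pderiv (Sum.inr j) (pderiv (Sum.inl j) P)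

/-- The operator `⟨x,∂_u⟩ = Σ_j x_j ∂_{u_j}`. -/
def xdu (m : ℕ) (P : PP m) : PP m :=
  ∑ j : Fin m, X (Sum.inl j) * pderiv (Sum.inr j) P

/-- The operator `⟨u,∂_x⟩ = Σ_j u_j ∂_{x_j}`. -/
def udx (m : ℕ) (P : PP m) : PP m :=
  ∑ j : Fin m, X (Sum.inr j) * pderiv (Sum.inl j) P

/-- The polynomial `|x|² = Σ_j x_j²`. -/
def nx2 (m : ℕ) : PP m := ∑ j : Fin m, X (Sum.inl j) ^ 2

/-- The polynomial `|u|² = Σ_j u_j²`. -/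
def nu2 (m : ℕ) : PP m := ∑ j : Fin m, X (Sum.inr j) ^ 2

/-- The polynomial `⟨u,x⟩ = Σ_j u_j x_j`. -/
def uxP (m : ℕ) : PP m := ∑ j : Fin m, X (Sum.inr j) * X (Sum.inl j)

/-- `P` is homogeneous of degree `p` in the `x`-variables and `q` in the `u`-variables. -/
def IsBihom (m p q : ℕ) (P : PP m) : Prop :=
  P.IsWeightedHomogeneous (Sum.elim (fun _ => 1) (fun _ => 0)) p ∧
  P.IsWeightedHomogeneous (Sum.elim (fun _ => 0) (fun _ => 1)) q

/-- `P` belongs to the space `ℋ_{k,l}` of simplicial harmonics. -/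
def IsSimp (m k l : ℕ) (P : PP m) : Prop :=
  IsBihom m k l P ∧ lapX m P = 0 ∧ lapU m P = 0 ∧ dudx m P = 0 ∧ xdu m P = 0

/-- The transvector generator `S_x` taken on bidegree `(p,·)`. -/
def opSx (m : ℕ) (p : ℤ) (P : PP m) : PP m :=
  xdu m P - (2 * (p : ℂ) + m - 2)⁻¹ • (nx2 m * dudx m P)

/-- The transvector generator `S_u` taken on bidegree `(·,q)`. -/
def opSu (m : ℕ) (q : ℤ) (P : PP m) : PP m :=
  udx m P - (2 * (q : ℂ) + m - 2)⁻¹ • (nu2 m * dudx m P)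

/-- The transvector generator `A = ⟨∂_u,∂_x⟩`. -/
def opA (m : ℕ) (P : PP m) : PP m := dudx m P

/-- The transvector generator `C` taken on bidegree `(p,q)`. -/
def opC (m : ℕ) (p q : ℤ) (P : PP m) : PP m :=
  uxP m * P - (2 * (p : ℂ) + m - 2)⁻¹ • (nx2 m * udx m P)
    - (2 * (q : ℂ) + m - 2)⁻¹ • (nu2 m * xdu m P)
    + ((2 * (p : ℂ) + m - 2) * (2 * (q : ℂ) + m - 2))⁻¹ • (nx2 m * (nu2 m * dudx m P))

/-- `SuIter m n q P`: apply `S_u` `n` times to `P`, starting at `u`-degree `q`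
(each application raises the `u`-degree by one). -/
def SuIter (m : ℕ) : ℕ → ℤ → PP m → PP m
  | 0, _, P => P
  | n+1, q, P => SuIter m n (q+1) (opSu m q P)

/-- `SxIter m n p P`: apply `S_x` `n` times to `P`, starting at `x`-degree `p`
(each application raises the `x`-degree by one). -/
def SxIter (m : ℕ) : ℕ → ℤ → PP m → PP m
  | 0, _, P => P
  | n+1, p, P => SxIter m n (p+1) (opSx m p P)

/-- `CIter m n p q P`: apply `C` `n` times to `P`, starting at bidegree `(p,q)`. -/
def CIter (m : ℕ) : ℕ → ℤ → ℤ → PP m → PP m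
  | 0, _, _, P => P
  | n+1, p, q, P => CIter m n (p+1) (q+1) (opC m p q P)

/-- `AIter m n P`: apply `A` `n` times to `P`. -/
def AIter (m : ℕ) (n : ℕ) (P : PP m) : PP m := (opA m)^[n] P

/-- The rising factorial `a^{(n)} = a(a+1)⋯(a+n-1)`. -/
def asc (a : ℂ) : ℕ → ℂ
  | 0 => 1
  | n+1 => asc a n * (a + n)

/-- The falling factorial `a_{(n)} = a(a-1)⋯(a-n+1)`. -/
def desc (a : ℂ) : ℕ → ℂ
  | 0 => 1
  | n+1 => desc a n * (a - n)

/-- The differential monomial `∂^d`: apply `∂_i` exactly `d i` times, for each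
variable `i`. -/
def derivMon (m : ℕ) (d : (Fin m ⊕ Fin m) →₀ ℕ) (Q : PP m) : PP m :=
  (Finset.univ : Finset (Fin m ⊕ Fin m)).toList.foldr
    (fun i R => (fun S => pderiv i S)^[d i] R) Q

/-- The Fischer inner product `[P,Q]_F = (P̄(∂)Q)(0)`: conjugate the coefficients of
`P`, replace its variables by the corresponding partial derivatives, apply the
resulting constant-coefficient differential operator to `Q`, and evaluate at `0`. -/
def fischer (m : ℕ) (P Q : PP m) : ℂ :=
  eval (fun _ => 0)
    (∑ d ∈ P.support, (starRingEnd ℂ) (P.coeff d) • derivMon m d Q)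

section Aux
variable {σ : Type*} [DecidableEq σ]

lemma coeff_pderiv (i : σ) (e : σ →₀ ℕ) (Q : MvPolynomial σ ℂ) :
    coeff e (pderiv i Q) = (e i + 1 : ℕ) * coeff (e + Finsupp.single i 1) Q := by
  induction Q using MvPolynomial.induction_on' with
  | monomial s a =>
    rcases Nat.eq_zero_or_pos (s i) with hsi | hsi
    · have hne : s ≠ e + Finsupp.single i 1 := by
        intro h; simp [h, Finsupp.add_apply, Finsupp.single_apply] at hsi
      simp [pderiv_monomial, hsi, coeff_monomial, hne]
    · have hle : Finsupp.single i 1 ≤ s := Finsupp.single_le_iff.2 hsi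
      have key : (s - Finsupp.single i 1 = e) ↔ (s = e + Finsupp.single i 1) := by
        constructor
        · rintro rfl; rw [tsub_add_cancel_of_le hle]
        · rintro rfl; rw [add_tsub_cancel_right]
      simp only [pderiv_monomial, coeff_monomial]
      by_cases h : s = e + Finsupp.single i 1
      · rw [if_pos (key.2 h), if_pos h]
        have : s i = e i + 1 := by simp [h, Finsupp.add_apply, Finsupp.single_apply]
        rw [this]; push_cast; ring
      · rw [if_neg (fun hh => h (key.1 hh)), if_neg h, mul_zero]
  | add p q hp hq => simp only [map_add, coeff_add, hp, hq]; ring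

/-- `(a+1)(a+2)⋯(a+n)` -/
def ratN (a n : ℕ) : ℕ := ∏ k ∈ Finset.range n, (a + k + 1)

lemma ratN_zero (a : ℕ) : ratN a 0 = 1 := rfl

lemma ratN_succ' (a n : ℕ) : ratN a (n + 1) = (a + 1) * ratN (a + 1) n := by
  rw [ratN, Finset.prod_range_succ', ratN, mul_comm]
  congr 1; apply Finset.prod_congr rfl; intro k _; ring

lemma ratN_zero_left (n : ℕ) : ratN 0 n = n.factorial := by
  unfold ratN
  induction n with
  | zero => simp
  | succ n ih => rw [Finset.prod_range_succ, ih, Nat.factorial_succ]; ring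

lemma coeff_pderiv_iterate (i : σ) (n : ℕ) (e : σ →₀ ℕ) (Q : MvPolynomial σ ℂ) :
    coeff e ((fun S => pderiv i S)^[n] Q)
      = (ratN (e i) n : ℂ) * coeff (e + Finsupp.single i n) Q := by
  induction n generalizing e with
  | zero => simp [ratN_zero]
  | succ n ih =>
    rw [Function.iterate_succ_apply', _root_.coeff_pderiv, ih]
    have h1 : ((e + Finsupp.single i 1 : σ →₀ ℕ)) i = e i + 1 := by
      simp [Finsupp.add_apply, Finsupp.single_apply]
    have h2 : e + Finsupp.single i 1 + Finsupp.single i n = e + Finsupp.single i (n + 1) := by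
      rw [add_assoc, ← Finsupp.single_add, add_comm 1 n]
    rw [h1, h2, ratN_succ']
    push_cast; ring

lemma coeff_foldr (d : σ →₀ ℕ) (l : List σ) (hl : l.Nodup) (e : σ →₀ ℕ) (Q : MvPolynomial σ ℂ) :
    coeff e (l.foldr (fun i R => (fun S => pderiv i S)^[d i] R) Q)
      = ((l.map fun j => (ratN (e j) (d j) : ℂ)).prod)
          * coeff (e + (l.map fun j => Finsupp.single j (d j)).sum) Q := by
  induction l generalizing e with
  | nil => simp
  | cons i l ih =>
    have hnd := hl
    rw [List.nodup_cons] at hnd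
    rw [List.foldr_cons, coeff_pderiv_iterate, ih hnd.2 _]
    have hco : ∀ j ∈ l, ((e + Finsupp.single i (d i)) j) = e j := by
      intro j hj
      have : j ≠ i := fun h => hnd.1 (h ▸ hj)
      simp [Finsupp.add_apply, Finsupp.single_apply, (Ne.symm this)]
    have hmap : (l.map fun j => (ratN ((e + Finsupp.single i (d i)) j) (d j) : ℂ))
        = l.map fun j => (ratN (e j) (d j) : ℂ) := by
      apply List.map_congr_left; intro j hj; rw [hco j hj]
    rw [hmap, List.map_cons, List.prod_cons, List.map_cons, List.sum_cons]
    rw [← add_assoc, add_right_comm e, mul_assoc]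


end Aux

section Aux2
variable {σ : Type*} [DecidableEq σ] [Fintype σ]

lemma sum_single_univ (d : σ →₀ ℕ) : ∑ j : σ, Finsupp.single j (d j) = d := by
  have h := Finsupp.sum_single d
  rw [Finsupp.sum] at h
  calc ∑ j : σ, Finsupp.single j (d j)
      = ∑ j ∈ d.support, Finsupp.single j (d j) :=
        (Finset.sum_subset (Finset.subset_univ _) (fun i _ hi => by
          rw [Finsupp.notMem_support_iff.1 hi, Finsupp.single_zero])).symm
    _ = d := h

/-- `d! = ∏ i (d i)!` as a complex number. -/
def factC (d : σ →₀ ℕ) : ℂ := ((∏ i : σ, (d i).factorial : ℕ) : ℂ)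

lemma factC_single_add (i : σ) (e : σ →₀ ℕ) :
    factC (Finsupp.single i 1 + e) = ((e i + 1 : ℕ) : ℂ) * factC e := by
  unfold factC
  rw [← Nat.cast_mul]
  congr 1
  rw [← Finset.mul_prod_erase Finset.univ _ (Finset.mem_univ i),
      ← Finset.mul_prod_erase Finset.univ (fun j => (e j).factorial) (Finset.mem_univ i)]
  have h1 : ((Finsupp.single i 1 + e : σ →₀ ℕ)) i = e i + 1 := by
    simp [Finsupp.add_apply, Finsupp.single_apply]
    omega
  have hprod : ∏ j ∈ Finset.univ.erase i, (((Finsupp.single i 1 + e : σ →₀ ℕ)) j).factorial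
      = ∏ j ∈ Finset.univ.erase i, (e j).factorial := by
    apply Finset.prod_congr rfl
    intro j hj
    have hne : j ≠ i := (Finset.mem_erase.1 hj).1
    simp [Finsupp.add_apply, Finsupp.single_apply, Ne.symm hne]
  rw [h1, Nat.factorial_succ, hprod]
  ring

end Aux2

section Fischer
variable {m : ℕ}

lemma eval0_derivMon (d : Fin m ⊕ Fin m →₀ ℕ) (Q : PP m) :
    eval (fun _ => 0) (derivMon m d Q) = factC d * coeff d Q := by
  rw [eval_zero', constantCoeff_eq]
  unfold derivMon
  rw [coeff_foldr d _ Finset.univ.nodup_toList]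
  simp only [Finsupp.coe_zero, Pi.zero_apply, ratN_zero_left]
  rw [Finset.prod_map_toList, Finset.sum_map_toList, sum_single_univ, zero_add, factC]
  push_cast
  ring

lemma fischer_eq (P Q : PP m) :
    fischer m P Q = ∑ d ∈ P.support, (starRingEnd ℂ) (coeff d P) * (factC d * coeff d Q) := by
  unfold fischer
  rw [map_sum]
  exact Finset.sum_congr rfl fun d _ => by rw [smul_eval, eval0_derivMon]

lemma fischer_eq_sum (P Q : PP m) (T : Finset (Fin m ⊕ Fin m →₀ ℕ)) (hT : P.support ⊆ T) :
    fischer m P Q = ∑ d ∈ T, (starRingEnd ℂ) (coeff d P) * (factC d * coeff d Q) := by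
  rw [fischer_eq]
  exact Finset.sum_subset hT (fun d _ hd => by
    rw [MvPolynomial.notMem_support_iff.1 hd]; simp)

lemma fischer_herm (P Q : PP m) : fischer m P Q = (starRingEnd ℂ) (fischer m Q P) := by
  classical
  rw [fischer_eq_sum P Q (P.support ∪ Q.support) Finset.subset_union_left,
      fischer_eq_sum Q P (P.support ∪ Q.support) Finset.subset_union_right, map_sum]
  refine Finset.sum_congr rfl fun d _ => ?_
  rw [map_mul, map_mul, Complex.conj_conj]
  unfold factC
  rw [map_natCast]
  ring

lemma fischer_add_left (P₁ P₂ Q : PP m) :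
    fischer m (P₁ + P₂) Q = fischer m P₁ Q + fischer m P₂ Q := by
  classical
  rw [fischer_eq_sum (P₁ + P₂) Q (P₁.support ∪ P₂.support) MvPolynomial.support_add,
      fischer_eq_sum P₁ Q (P₁.support ∪ P₂.support) Finset.subset_union_left,
      fischer_eq_sum P₂ Q (P₁.support ∪ P₂.support) Finset.subset_union_right,
      ← Finset.sum_add_distrib]
  exact Finset.sum_congr rfl fun d _ => by rw [coeff_add, map_add]; ring

lemma fischer_smul_left (c : ℂ) (P Q : PP m) :
    fischer m (c • P) Q = (starRingEnd ℂ) c * fischer m P Q := by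
  rw [fischer_eq_sum (c • P) Q P.support MvPolynomial.support_smul, fischer_eq, Finset.mul_sum]
  exact Finset.sum_congr rfl fun d _ => by
    rw [MvPolynomial.coeff_smul, smul_eq_mul, map_mul]; ring

lemma fischer_zero_left (Q : PP m) : fischer m 0 Q = 0 := by
  rw [fischer_eq]; simp

lemma fischer_zero_right (P : PP m) : fischer m P 0 = 0 := by
  rw [fischer_eq]; simp

lemma fischer_sub_left (P₁ P₂ Q : PP m) :
    fischer m (P₁ - P₂) Q = fischer m P₁ Q - fischer m P₂ Q := by
  have : P₁ - P₂ = P₁ + (-1 : ℂ) • P₂ := by rw [neg_one_smul]; ring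
  rw [this, fischer_add_left, fischer_smul_left]
  simp only [map_neg, map_one]
  ring

lemma fischer_sum_left {α : Type*} (s : Finset α) (f : α → PP m) (Q : PP m) :
    fischer m (∑ j ∈ s, f j) Q = ∑ j ∈ s, fischer m (f j) Q := by
  classical
  induction s using Finset.cons_induction with
  | empty => simp [fischer_zero_left]
  | cons a s ha ih => rw [Finset.sum_cons, Finset.sum_cons, fischer_add_left, ih]

lemma fischer_sum_right {α : Type*} (s : Finset α) (P : PP m) (f : α → PP m) :
    fischer m P (∑ j ∈ s, f j) = ∑ j ∈ s, fischer m P (f j) := by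
  rw [fischer_herm, fischer_sum_left, map_sum]
  exact Finset.sum_congr rfl fun j _ => (fischer_herm P (f j)).symm

lemma fischer_smul_right (c : ℂ) (P Q : PP m) :
    fischer m P (c • Q) = c * fischer m P Q := by
  rw [fischer_herm, fischer_smul_left, map_mul, Complex.conj_conj, ← fischer_herm]

lemma fischer_sub_right (P Q₁ Q₂ : PP m) :
    fischer m P (Q₁ - Q₂) = fischer m P Q₁ - fischer m P Q₂ := by
  rw [fischer_herm, fischer_sub_left, map_sub, ← fischer_herm, ← fischer_herm]

lemma fischer_X_mul (i : Fin m ⊕ Fin m) (P Q : PP m) :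
    fischer m (X i * P) Q = fischer m P (pderiv i Q) := by
  classical
  set T := P.support.image (fun e => Finsupp.single i 1 + e) with hTdef
  have hsub : (X i * P).support ⊆ T := by
    intro d hd
    rw [MvPolynomial.mem_support_iff, MvPolynomial.coeff_X_mul'] at hd
    by_cases hi : i ∈ d.support
    · rw [if_pos hi] at hd
      refine Finset.mem_image.2 ⟨d - Finsupp.single i 1, MvPolynomial.mem_support_iff.2 hd, ?_⟩
      have hle : Finsupp.single i 1 ≤ d := Finsupp.single_le_iff.2
        (Nat.one_le_iff_ne_zero.2 (Finsupp.mem_support_iff.1 hi))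
      rw [add_comm, tsub_add_cancel_of_le hle]
    · rw [if_neg hi] at hd; exact absurd rfl hd
  rw [fischer_eq_sum _ Q T hsub, hTdef,
      Finset.sum_image (fun a _ b _ h => by exact add_left_cancel h), fischer_eq]
  refine Finset.sum_congr rfl fun e _ => ?_
  rw [MvPolynomial.coeff_X_mul, factC_single_add, _root_.coeff_pderiv, add_comm e]
  ring

lemma fischer_pderiv (i : Fin m ⊕ Fin m) (P Q : PP m) :
    fischer m (pderiv i P) Q = fischer m P (X i * Q) := by
  rw [fischer_herm, ← fischer_X_mul, ← fischer_herm]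

lemma pderiv_comm (i j : Fin m ⊕ Fin m) (Q : PP m) :
    pderiv i (pderiv j Q) = pderiv j (pderiv i Q) := by
  rcases eq_or_ne i j with rfl | hne
  · rfl
  apply MvPolynomial.ext
  intro e
  rw [_root_.coeff_pderiv, _root_.coeff_pderiv, _root_.coeff_pderiv, _root_.coeff_pderiv]
  have h1 : ((e + Finsupp.single i 1 : Fin m ⊕ Fin m →₀ ℕ)) j = e j := by
    simp [Finsupp.add_apply, Finsupp.single_apply, hne, Ne.symm hne]
  have h2 : ((e + Finsupp.single j 1 : Fin m ⊕ Fin m →₀ ℕ)) i = e i := by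
    simp [Finsupp.add_apply, Finsupp.single_apply, hne, Ne.symm hne]
  rw [h1, h2, add_right_comm]
  ring

end Fischer


section Ops
variable {m : ℕ}

lemma fischer_nx2_mul (R Q : PP m) (hQ : lapX m Q = 0) : fischer m (nx2 m * R) Q = 0 := by
  have h : nx2 m * R = ∑ j : Fin m, X (Sum.inl j) * (X (Sum.inl j) * R) := by
    rw [nx2, Finset.sum_mul]
    exact Finset.sum_congr rfl fun j _ => by rw [sq, mul_assoc]
  rw [h, fischer_sum_left,
    Finset.sum_congr rfl (fun (j : Fin m) _ => by
      rw [fischer_X_mul, fischer_X_mul] :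
      ∀ j ∈ Finset.univ, fischer m (X (Sum.inl j) * (X (Sum.inl j) * R)) Q
        = fischer m R (pderiv (Sum.inl j) (pderiv (Sum.inl j) Q))),
    ← fischer_sum_right, ← lapX, hQ, fischer_zero_right]

lemma fischer_nu2_mul (R Q : PP m) (hQ : lapU m Q = 0) : fischer m (nu2 m * R) Q = 0 := by
  have h : nu2 m * R = ∑ j : Fin m, X (Sum.inr j) * (X (Sum.inr j) * R) := by
    rw [nu2, Finset.sum_mul]
    exact Finset.sum_congr rfl fun j _ => by rw [sq, mul_assoc]
  rw [h, fischer_sum_left,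
    Finset.sum_congr rfl (fun (j : Fin m) _ => by
      rw [fischer_X_mul, fischer_X_mul] :
      ∀ j ∈ Finset.univ, fischer m (X (Sum.inr j) * (X (Sum.inr j) * R)) Q
        = fischer m R (pderiv (Sum.inr j) (pderiv (Sum.inr j) Q))),
    ← fischer_sum_right, ← lapU, hQ, fischer_zero_right]

lemma fischer_uxP_mul (P Q : PP m) : fischer m (uxP m * P) Q = fischer m P (dudx m Q) := by
  have h : uxP m * P = ∑ j : Fin m, X (Sum.inr j) * (X (Sum.inl j) * P) := by
    rw [uxP, Finset.sum_mul]
    exact Finset.sum_congr rfl fun j _ => by rw [mul_assoc]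
  rw [h, fischer_sum_left,
    Finset.sum_congr rfl (fun (j : Fin m) _ => by
      rw [fischer_X_mul, fischer_X_mul, pderiv_comm] :
      ∀ j ∈ Finset.univ, fischer m (X (Sum.inr j) * (X (Sum.inl j) * P)) Q
        = fischer m P (pderiv (Sum.inr j) (pderiv (Sum.inl j) Q))),
    ← fischer_sum_right, ← dudx]

lemma fischer_udx (P Q : PP m) : fischer m (udx m P) Q = fischer m P (xdu m Q) := by
  rw [udx, fischer_sum_left,
    Finset.sum_congr rfl (fun (j : Fin m) _ => by
      rw [fischer_X_mul, fischer_pderiv] :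
      ∀ j ∈ Finset.univ, fischer m (X (Sum.inr j) * pderiv (Sum.inl j) P) Q
        = fischer m P (X (Sum.inl j) * pderiv (Sum.inr j) Q)),
    ← fischer_sum_right, ← xdu]

end Ops

/-- the transvector generators are pairwise Fischer adjoint:
`[C P, Q]_F = [P, A Q]_F` and `[S_u P, Q]_F = [P, S_x Q]_F` on double harmonics. -/
theorem stmt_16 (m : ℕ) (hm : 4 < m) :
    (∀ p q : ℕ, ∀ P Q : PP m,
      IsBihom m p q P → lapX m P = 0 → lapU m P = 0 →
      IsBihom m (p + 1) (q + 1) Q → lapX m Q = 0 → lapU m Q = 0 →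
      fischer m (opC m (p : ℤ) (q : ℤ) P) Q = fischer m P (opA m Q)) ∧
    (∀ p q : ℕ, 1 ≤ p → ∀ P Q : PP m,
      IsBihom m p q P → lapX m P = 0 → lapU m P = 0 →
      IsBihom m (p - 1) (q + 1) Q → lapX m Q = 0 → lapU m Q = 0 →
      fischer m (opSu m (q : ℤ) P) Q = fischer m P (opSx m ((p : ℤ) - 1) Q)) := by
  constructor
  · intro p q P Q hP hPx hPu hQ hQx hQu
    rw [opC, fischer_add_left, fischer_sub_left, fischer_sub_left, fischer_smul_left,
      fischer_smul_left, fischer_smul_left, fischer_uxP_mul, fischer_nx2_mul _ _ hQx,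
      fischer_nu2_mul _ _ hQu, fischer_nx2_mul _ _ hQx, opA]
    ring
  · intro p q hp P Q hP hPx hPu hQ hQx hQu
    rw [opSu, fischer_sub_left, fischer_smul_left, fischer_nu2_mul _ _ hQu, fischer_udx,
      mul_zero, sub_zero, opSx, fischer_sub_right, fischer_smul_right]
    have h0 : fischer m P (nx2 m * dudx m Q) = 0 := by
      rw [fischer_herm, fischer_nx2_mul _ _ hPx, map_zero]
    rw [h0, mul_zero, sub_zero]
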